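/- Let G be a bridgeless connected subcubic graph, V₀ ⊆ V(G), and let N be the set of vertices outside V₀ having a neighbour in V₀. Let (N, E*) be a graph on vertex set N each of whose connected components is either a single vertex or has at least three vertices, and assume some pair in E* is not an edge of G. Then there exists e ∈ E* with e ∉ E(G) such that the graph obtained from G by deleting V₀ and adding the edge e is subcubic and has no connected component that is 3-regular. -/

import Mathlib

open SimpleGraph Finset
open scoped Classical

/-- `M` is a matching of `G`: a set of edges of `G` that are pairwise non-adjacent. -/
def IsMatchingSet {V : Type} (G : SimpleGraph V) (M : Finset (Sym2 V)) : Prop :=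
  (∀ e ∈ M, e ∈ G.edgeSet) ∧
    ∀ e ∈ M, ∀ f ∈ M, e ≠ f → ∀ v : V, v ∈ e → v ∉ f

/-- `M` is a maximal matching of `G`: a matching that cannot be extended. -/
def IsMaximalMatching {V : Type} (G : SimpleGraph V) (M : Finset (Sym2 V)) : Prop :=
  IsMatchingSet G M ∧ ∀ e ∈ G.edgeSet, e ∉ M → ¬ IsMatchingSet G (insert e M)

/-- The graph obtained from `G` by deleting the vertex set `V₀` (keeping only edges
with both endpoints outside `V₀`) and adding the edge `ab`. -/
def reducedGraph {V : Type} (G : SimpleGraph V) (V₀ : Set V) (a b : V) : SimpleGraph V :=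
  SimpleGraph.fromEdgeSet ({e | e ∈ G.edgeSet ∧ ∀ x ∈ e, x ∉ V₀} ∪ {s(a, b)})

set_option linter.unusedSectionVars false

namespace Stmt6Aux

variable {V : Type} (G : SimpleGraph V) (V₀ : Set V)

/-- The graph `G - V₀`. -/
def delG : SimpleGraph V :=
  SimpleGraph.fromEdgeSet {e | e ∈ G.edgeSet ∧ ∀ x ∈ e, x ∉ V₀}

lemma delG_adj {u v : V} : (delG G V₀).Adj u v ↔ G.Adj u v ∧ u ∉ V₀ ∧ v ∉ V₀ := by
  constructor
  · intro h
    rcases (SimpleGraph.fromEdgeSet_adj _).mp h with ⟨⟨he, hx⟩, hne⟩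
    exact ⟨(SimpleGraph.mem_edgeSet G).mp he, hx u (by simp), hx v (by simp)⟩
  · rintro ⟨h, hu, hv⟩
    refine (SimpleGraph.fromEdgeSet_adj _).mpr ⟨⟨(SimpleGraph.mem_edgeSet G).mpr h, ?_⟩, h.ne⟩
    intro x hx; rcases Sym2.mem_iff.mp hx with rfl | rfl <;> assumption

lemma reduced_adj {a b u v : V} :
    (reducedGraph G V₀ a b).Adj u v ↔
      ((G.Adj u v ∧ u ∉ V₀ ∧ v ∉ V₀) ∨ (u ≠ v ∧ s(u, v) = s(a, b))) := by
  unfold reducedGraph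
  rw [SimpleGraph.fromEdgeSet_adj _]
  constructor
  · rintro ⟨hm, hne⟩
    rcases hm with ⟨he, hx⟩ | he
    · exact Or.inl ⟨(SimpleGraph.mem_edgeSet G).mp he, hx u (by simp), hx v (by simp)⟩
    · exact Or.inr ⟨hne, he⟩
  · rintro (⟨h, hu, hv⟩ | ⟨hne, he⟩)
    · refine ⟨Or.inl ⟨(SimpleGraph.mem_edgeSet G).mpr h, ?_⟩, h.ne⟩
      intro x hx; rcases Sym2.mem_iff.mp hx with rfl | rfl <;> assumption
    · exact ⟨Or.inr he, hne⟩

lemma delG_le (a b : V) : delG G V₀ ≤ reducedGraph G V₀ a b := by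
  intro u v h
  exact (reduced_adj G V₀).mpr (Or.inl ((delG_adj G V₀).mp h))

lemma reduced_comm (a b : V) : reducedGraph G V₀ a b = reducedGraph G V₀ b a := by
  unfold reducedGraph
  rw [Sym2.eq_swap]


variable [Fintype V]

/-- A vertex of `V₀` is isolated in the reduced graph. -/
lemma reduced_deg_V₀ {a b v : V} (ha : a ∉ V₀) (hb : b ∉ V₀) (hv : v ∈ V₀) :
    (reducedGraph G V₀ a b).degree v = 0 := by
  rw [SimpleGraph.degree, Finset.card_eq_zero, Finset.eq_empty_iff_forall_notMem]
  intro w hw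
  rw [SimpleGraph.mem_neighborFinset, reduced_adj] at hw
  rcases hw with ⟨_, h, _⟩ | ⟨_, he⟩
  · exact h hv
  · rcases Sym2.eq_iff.mp he with ⟨rfl, _⟩ | ⟨rfl, _⟩
    · exact ha hv
    · exact hb hv

/-- An external-neighbourhood vertex different from both new endpoints has degree ≤ 2. -/
lemma reduced_deg_N (hsub : ∀ v, G.degree v ≤ 3) {a b x y : V}
    (hy : y ∈ V₀) (hxy : G.Adj x y) (hxa : x ≠ a) (hxb : x ≠ b) :
    (reducedGraph G V₀ a b).degree x ≤ 2 := by
  have hsubset : (reducedGraph G V₀ a b).neighborFinset x ⊆ (G.neighborFinset x).erase y := by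
    intro w hw
    rw [SimpleGraph.mem_neighborFinset, reduced_adj] at hw
    rcases hw with ⟨h, _, hw2⟩ | ⟨_, he⟩
    · exact Finset.mem_erase.mpr ⟨fun hwy => hw2 (hwy ▸ hy), (SimpleGraph.mem_neighborFinset _ _ _).mpr h⟩
    · rcases Sym2.eq_iff.mp he with ⟨rfl, _⟩ | ⟨rfl, _⟩
      · exact absurd rfl hxa
      · exact absurd rfl hxb
  have h1 := Finset.card_le_card hsubset
  rw [Finset.card_erase_of_mem ((SimpleGraph.mem_neighborFinset _ _ _).mpr hxy)] at h1
  have := hsub x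
  rw [SimpleGraph.degree] at *
  omega

/-- Degree bound at the endpoint `a` of the added edge. -/
lemma reduced_deg_a (hsub : ∀ v, G.degree v ≤ 3) {a b y : V}
    (hy : y ∈ V₀) (hay : G.Adj a y) (hab : a ≠ b) :
    (reducedGraph G V₀ a b).degree a ≤ 3 := by
  have hsubset : (reducedGraph G V₀ a b).neighborFinset a ⊆
      insert b ((G.neighborFinset a).erase y) := by
    intro w hw
    rw [SimpleGraph.mem_neighborFinset, reduced_adj] at hw
    rcases hw with ⟨h, _, hw2⟩ | ⟨_, he⟩
    · exact Finset.mem_insert_of_mem (Finset.mem_erase.mpr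
        ⟨fun hwy => hw2 (hwy ▸ hy), (SimpleGraph.mem_neighborFinset _ _ _).mpr h⟩)
    · rcases Sym2.eq_iff.mp he with ⟨_, rfl⟩ | ⟨rfl, _⟩
      · exact Finset.mem_insert_self _ _
      · exact absurd rfl hab
  have h1 := Finset.card_le_card hsubset
  have h2 := Finset.card_insert_le b ((G.neighborFinset a).erase y)
  rw [Finset.card_erase_of_mem ((SimpleGraph.mem_neighborFinset _ _ _).mpr hay)] at h2
  have := hsub a
  rw [SimpleGraph.degree] at *
  omega

/-- If `a` has two neighbours in `V₀` then its reduced degree is at most 2. -/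
lemma reduced_deg_a_two (hsub : ∀ v, G.degree v ≤ 3) {a b y z : V}
    (hy : y ∈ V₀) (hz : z ∈ V₀) (hyz : y ≠ z)
    (hay : G.Adj a y) (haz : G.Adj a z) (hab : a ≠ b) :
    (reducedGraph G V₀ a b).degree a ≤ 2 := by
  have hsubset : (reducedGraph G V₀ a b).neighborFinset a ⊆
      insert b (((G.neighborFinset a).erase y).erase z) := by
    intro w hw
    rw [SimpleGraph.mem_neighborFinset, reduced_adj] at hw
    rcases hw with ⟨h, _, hw2⟩ | ⟨_, he⟩
    · refine Finset.mem_insert_of_mem (Finset.mem_erase.mpr ⟨fun hwz => hw2 (hwz ▸ hz),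
        Finset.mem_erase.mpr ⟨fun hwy => hw2 (hwy ▸ hy), (SimpleGraph.mem_neighborFinset _ _ _).mpr h⟩⟩)
    · rcases Sym2.eq_iff.mp he with ⟨_, rfl⟩ | ⟨rfl, _⟩
      · exact Finset.mem_insert_self _ _
      · exact absurd rfl hab
  have h1 := Finset.card_le_card hsubset
  have h2 := Finset.card_insert_le b (((G.neighborFinset a).erase y).erase z)
  have hzmem : z ∈ (G.neighborFinset a).erase y :=
    Finset.mem_erase.mpr ⟨Ne.symm hyz, (SimpleGraph.mem_neighborFinset _ _ _).mpr haz⟩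
  rw [Finset.card_erase_of_mem hzmem,
    Finset.card_erase_of_mem ((SimpleGraph.mem_neighborFinset _ _ _).mpr hay)] at h2
  have := hsub a
  rw [SimpleGraph.degree] at *
  omega

/-- A vertex not in `V₀` and different from the endpoints keeps degree ≤ 3. -/
lemma reduced_deg_other (hsub : ∀ v, G.degree v ≤ 3) {a b v : V}
    (hva : v ≠ a) (hvb : v ≠ b) :
    (reducedGraph G V₀ a b).degree v ≤ 3 := by
  have hsubset : (reducedGraph G V₀ a b).neighborFinset v ⊆ G.neighborFinset v := by
    intro w hw
    rw [SimpleGraph.mem_neighborFinset, reduced_adj] at hw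
    rcases hw with ⟨h, _, _⟩ | ⟨_, he⟩
    · exact (SimpleGraph.mem_neighborFinset _ _ _).mpr h
    · rcases Sym2.eq_iff.mp he with ⟨rfl, _⟩ | ⟨rfl, _⟩
      · exact absurd rfl hva
      · exact absurd rfl hvb
  exact le_trans (Finset.card_le_card hsubset) (hsub v)


/-- Every vertex outside `V₀` reaches, inside `G - V₀`, a vertex of the external
neighbourhood of `V₀`. -/
lemma reach_N {v y₀ : V} (p : G.Walk v y₀) :
    y₀ ∈ V₀ → v ∉ V₀ → ∃ x, (delG G V₀).Reachable v x ∧ x ∉ V₀ ∧ ∃ y ∈ V₀, G.Adj x y := by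
  induction p with
  | nil => exact fun hy hv => absurd hy hv
  | @cons u w _ h p ih =>
    intro hy hu
    by_cases hw : w ∈ V₀
    · exact ⟨u, SimpleGraph.Reachable.refl u, hu, w, hw, h⟩
    · obtain ⟨x, hx, h2, h3⟩ := ih hy hw
      exact ⟨x, (SimpleGraph.Adj.reachable ((delG_adj G V₀).mpr ⟨h, hu, hw⟩)).trans hx, h2, h3⟩

/-- Walk induction used for the bridge argument. -/
lemma bridge_walk {a b y : V}
    (huniq : ∀ z ∈ V₀, G.Adj a z → z = y)
    (hK : ∀ x, (delG G V₀).Reachable a x → x ∉ V₀ → (∃ z ∈ V₀, G.Adj x z) → x = a ∨ x = b)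
    {u t : V} (p : (G \ SimpleGraph.fromEdgeSet {s(a, y)}).Walk u t) :
    t ∈ V₀ → u ∉ V₀ → (delG G V₀).Reachable a u → (delG G V₀).Reachable a b := by
  induction p with
  | nil => exact fun ht hu _ => absurd ht hu
  | @cons u w _ h p ih =>
    intro ht hu hau
    rw [SimpleGraph.sdiff_adj] at h
    by_cases hw : w ∈ V₀
    · rcases hK u hau hu ⟨w, hw, h.1⟩ with rfl | rfl
      · have hwy : w = y := huniq w hw h.1
        subst hwy
        exact absurd ((SimpleGraph.fromEdgeSet_adj _).mpr ⟨rfl, h.1.ne⟩) h.2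
      · exact hau
    · exact ih ht hw (hau.trans (SimpleGraph.Adj.reachable ((delG_adj G V₀).mpr ⟨h.1, hu, hw⟩)))

/-- Find an `H`-edge leaving `{a, b}` along a walk. -/
lemma exit_edge {H : SimpleGraph V} {a b u c : V} (p : H.Walk u c) :
    c ≠ a → c ≠ b → (u = a ∨ u = b) →
    ∃ d e, (d = a ∨ d = b) ∧ e ≠ a ∧ e ≠ b ∧ H.Adj d e := by
  induction p with
  | nil =>
    rintro hc hc' (rfl | rfl)
    · exact absurd rfl hc
    · exact absurd rfl hc'
  | @cons u w _ h p ih =>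
    intro hc hc' hu
    by_cases hw : w = a ∨ w = b
    · exact ih hc hc' hw
    · push_neg at hw
      exact ⟨u, w, hu, hw.1, hw.2, h⟩


/-- Packaging: a valid pair `(p, q)` together with a low-degree vertex in the
component of `p` gives the full conclusion. -/
lemma main_pair (hsub : ∀ v, G.degree v ≤ 3) (hconn : G.Connected)
    {p q : V} (hp : p ∉ V₀) (hq : q ∉ V₀)
    (hyp : ∃ y ∈ V₀, G.Adj p y) (hyq : ∃ y ∈ V₀, G.Adj q y)
    (hnadj : ¬ G.Adj p q) (hpq : p ≠ q)
    (hz : ∃ z, (reducedGraph G V₀ p q).Reachable p z ∧ (reducedGraph G V₀ p q).degree z ≠ 3) :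
    (∀ v, (reducedGraph G V₀ p q).degree v ≤ 3) ∧
    (∀ v, ∃ w, (reducedGraph G V₀ p q).Reachable v w ∧ (reducedGraph G V₀ p q).degree w ≠ 3) := by
  obtain ⟨y₀, hy₀, hpy₀⟩ := hyp
  obtain ⟨y₁, hy₁, hqy₁⟩ := hyq
  have hqp : (reducedGraph G V₀ p q).Adj p q :=
    (reduced_adj G V₀).mpr (Or.inr ⟨hpq, rfl⟩)
  constructor
  · intro v
    by_cases hvp : v = p
    · subst hvp; exact reduced_deg_a G V₀ hsub hy₀ hpy₀ hpq
    · by_cases hvq : v = q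
      · subst hvq
        rw [reduced_comm]
        exact reduced_deg_a G V₀ hsub hy₁ hqy₁ (Ne.symm hpq)
      · exact reduced_deg_other G V₀ hsub hvp hvq
  · intro v
    by_cases hv : v ∈ V₀
    · refine ⟨v, SimpleGraph.Reachable.refl v, ?_⟩
      rw [reduced_deg_V₀ G V₀ hp hq hv]
      omega
    · obtain ⟨x, hx, hxV, y, hy, hxy⟩ :=
        reach_N G V₀ ((hconn.preconnected v y₀).some) hy₀ hv
      have hreach : (reducedGraph G V₀ p q).Reachable v x :=
        SimpleGraph.Reachable.mono (delG_le G V₀ p q) hx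
      by_cases hxp : x = p
      · obtain ⟨z, hz1, hz2⟩ := hz
        exact ⟨z, (hxp ▸ hreach).trans hz1, hz2⟩
      · by_cases hxq : x = q
        · obtain ⟨z, hz1, hz2⟩ := hz
          subst hxq
          exact ⟨z, (hreach.trans hqp.symm.reachable).trans hz1, hz2⟩
        · refine ⟨x, hreach, ?_⟩
          have := reduced_deg_N G V₀ hsub hy hxy hxp hxq
          omega

end Stmt6Aux

open Stmt6Aux

/-- Technical lemma: in a bridgeless connected subcubic graph one can delete `V₀` and
add back a non-edge of `E*` so that no component of the result is cubic. -/
theorem stmt_6 {V : Type} [Fintype V] (G : SimpleGraph V)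
    (hsub : ∀ v, G.degree v ≤ 3) (hconn : G.Connected)
    (hbridgeless : ∀ e : Sym2 V, ¬ G.IsBridge e)
    (V₀ : Set V) (N : Set V)
    (hN : N = {x | x ∉ V₀ ∧ ∃ y ∈ V₀, G.Adj x y})
    (H : SimpleGraph V)
    (hHN : ∀ a b, H.Adj a b → a ∈ N ∧ b ∈ N)
    (hcomp : ∀ v ∈ N, {w | H.Reachable v w} = {v} ∨ 3 ≤ ({w | H.Reachable v w} : Set V).ncard)
    (hex : ∃ e ∈ H.edgeSet, e ∉ G.edgeSet) :
    ∃ a b : V, H.Adj a b ∧ ¬ G.Adj a b ∧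
      (∀ v, (reducedGraph G V₀ a b).degree v ≤ 3) ∧
      (∀ v, ∃ w, (reducedGraph G V₀ a b).Reachable v w ∧
        (reducedGraph G V₀ a b).degree w ≠ 3) := by
  obtain ⟨e, heH, heG⟩ := hex
  induction e using Sym2.ind with
  | _ a b =>
  rw [SimpleGraph.mem_edgeSet] at heH heG
  have hab : a ≠ b := heH.ne
  have hNa : a ∉ V₀ ∧ ∃ y ∈ V₀, G.Adj a y := by
    have := (hHN a b heH).1; rwa [hN, Set.mem_setOf_eq] at this
  have hNb : b ∉ V₀ ∧ ∃ y ∈ V₀, G.Adj b y := by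
    have := (hHN a b heH).2; rwa [hN, Set.mem_setOf_eq] at this
  obtain ⟨haV, ya, hya, haya⟩ := hNa
  obtain ⟨hbV, yb, hyb, hbyb⟩ := hNb
  have hadjab : (reducedGraph G V₀ a b).Adj a b :=
    (reduced_adj G V₀).mpr (Or.inr ⟨hab, rfl⟩)
  by_cases hA : ∃ x, x ∉ V₀ ∧ (∃ y ∈ V₀, G.Adj x y) ∧ x ≠ a ∧ x ≠ b ∧
      ((delG G V₀).Reachable a x ∨ (delG G V₀).Reachable b x)
  · -- there is an external vertex in the component of the new edge
    obtain ⟨x, hxV, ⟨y, hy, hxy⟩, hxa, hxb, hor⟩ := hA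
    have hz : ∃ z, (reducedGraph G V₀ a b).Reachable a z ∧
        (reducedGraph G V₀ a b).degree z ≠ 3 := by
      refine ⟨x, ?_, ?_⟩
      · rcases hor with h | h
        · exact SimpleGraph.Reachable.mono (delG_le G V₀ a b) h
        · exact hadjab.reachable.trans (SimpleGraph.Reachable.mono (delG_le G V₀ a b) h)
      · have := reduced_deg_N G V₀ hsub hy hxy hxa hxb
        omega
    obtain ⟨P1, P2⟩ := main_pair G V₀ hsub hconn haV hbV ⟨ya, hya, haya⟩ ⟨yb, hyb, hbyb⟩
      heG hab hz
    exact ⟨a, b, heH, heG, P1, P2⟩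
  · push_neg at hA
    by_cases hda : (reducedGraph G V₀ a b).degree a = 3
    · by_cases hdb : (reducedGraph G V₀ a b).degree b = 3
      · -- the hard case: both endpoints keep degree 3
        have huniq : ∀ z ∈ V₀, G.Adj a z → z = ya := by
          intro z hzV hz
          by_contra hne
          have := reduced_deg_a_two G V₀ hsub hya hzV (fun h => hne h.symm) haya hz hab
          omega
        have hKa : ∀ x, (delG G V₀).Reachable a x → x ∉ V₀ →
            (∃ z ∈ V₀, G.Adj x z) → x = a ∨ x = b := by
          intro x hr hxV hxz
          by_cases hxa : x = a
          · exact Or.inl hxa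
          · by_cases hxb : x = b
            · exact Or.inr hxb
            · exact absurd hr (hA x hxV hxz hxa hxb).1
        have hbr := hbridgeless s(a, ya)
        rw [SimpleGraph.isBridge_iff] at hbr
        push_neg at hbr
        have hDab : (delG G V₀).Reachable a b :=
          bridge_walk G V₀ huniq hKa hbr.some hya haV (SimpleGraph.Reachable.refl a)
        -- find a third vertex in the H-component of a
        have hcompa := hcomp a (by rw [hN]; exact ⟨haV, ya, hya, haya⟩)
        have hbmem : b ∈ {w | H.Reachable a w} := heH.reachable
        rcases hcompa with hsingle | hcard
        · rw [hsingle] at hbmem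
          exact absurd hbmem.symm hab
        · have hns : ¬ ({w | H.Reachable a w} ⊆ ({a, b} : Set V)) := by
            intro hsubset
            have h2 : ({w | H.Reachable a w}).ncard ≤ ({a, b} : Set V).ncard :=
              Set.ncard_le_ncard hsubset (Set.toFinite _)
            have h3 : ({a, b} : Set V).ncard ≤ 2 := by
              have := Set.ncard_insert_le a ({b} : Set V)
              simpa [Set.ncard_singleton] using this
            omega
          obtain ⟨c, hcreach, hcab⟩ := Set.not_subset.mp hns
          simp only [Set.mem_insert_iff, Set.mem_singleton_iff, not_or] at hcab
          obtain ⟨d, x, hd, hxa, hxb, hdx⟩ :=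
            exit_edge (V := V) (hcreach.some) hcab.1 hcab.2 (Or.inl rfl)
          have hxN : x ∉ V₀ ∧ ∃ y ∈ V₀, G.Adj x y := by
            have := (hHN d x hdx).2; rwa [hN, Set.mem_setOf_eq] at this
          obtain ⟨hxV, yx, hyx, hxyx⟩ := hxN
          have hdV : d ∉ V₀ := by rcases hd with rfl | rfl <;> assumption
          have hnGdx : ¬ G.Adj d x := by
            intro hG
            have hDdx : (delG G V₀).Adj d x := (delG_adj G V₀).mpr ⟨hG, hdV, hxV⟩
            have hDax : (delG G V₀).Reachable a x := by
              rcases hd with rfl | rfl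
              · exact hDdx.reachable
              · exact hDab.trans hDdx.reachable
            exact (hA x hxV ⟨yx, hyx, hxyx⟩ hxa hxb).1 hDax
          have hdxne : d ≠ x := hdx.ne
          rcases hd with rfl | rfl
          · -- d = a : new pair (d, x), the vertex b has small degree in its component
            have hz : ∃ z, (reducedGraph G V₀ d x).Reachable d z ∧
                (reducedGraph G V₀ d x).degree z ≠ 3 := by
              refine ⟨b, SimpleGraph.Reachable.mono (delG_le G V₀ d x) hDab, ?_⟩
              have := reduced_deg_N G V₀ hsub hyb hbyb (Ne.symm hab) (Ne.symm hxb)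
              omega
            obtain ⟨P1, P2⟩ := main_pair G V₀ hsub hconn haV hxV ⟨ya, hya, haya⟩
              ⟨yx, hyx, hxyx⟩ hnGdx hdxne hz
            exact ⟨d, x, hdx, hnGdx, P1, P2⟩
          · -- d = b : new pair (d, x), the vertex a has small degree in its component
            have hz : ∃ z, (reducedGraph G V₀ d x).Reachable d z ∧
                (reducedGraph G V₀ d x).degree z ≠ 3 := by
              refine ⟨a, SimpleGraph.Reachable.mono (delG_le G V₀ d x) hDab.symm, ?_⟩
              have := reduced_deg_N G V₀ hsub hya haya hab (Ne.symm hxa)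
              omega
            obtain ⟨P1, P2⟩ := main_pair G V₀ hsub hconn hbV hxV ⟨yb, hyb, hbyb⟩
              ⟨yx, hyx, hxyx⟩ hnGdx hdxne hz
            exact ⟨d, x, hdx, hnGdx, P1, P2⟩
      · -- degree of b is not 3 : use the pair (a, b) itself
        obtain ⟨P1, P2⟩ := main_pair G V₀ hsub hconn haV hbV ⟨ya, hya, haya⟩
          ⟨yb, hyb, hbyb⟩ heG hab ⟨b, hadjab.reachable, hdb⟩
        exact ⟨a, b, heH, heG, P1, P2⟩
    · -- degree of a is not 3 : use the pair (a, b) itself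
      obtain ⟨P1, P2⟩ := main_pair G V₀ hsub hconn haV hbV ⟨ya, hya, haya⟩
        ⟨yb, hyb, hbyb⟩ heG hab ⟨a, SimpleGraph.Reachable.refl a, hda⟩
      exact ⟨a, b, heH, heG, P1, P2⟩
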